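/- Suppose k is algebraically closed, p ∈ A⊗B⊗k² is a nonzero concise tensor, and dim A ≥ dim B. Then the slice space p(A*) ⊆ B⊗k² contains a matrix of rank one. -/

import Mathlib

open TensorProduct

/-- The slice of `p ∈ A ⊗ B ⊗ C` at a functional `α ∈ A*`. -/
noncomputable def pSlice {k : Type*} [Field k] {A B C : Type*} [AddCommGroup A] [Module k A]
    [AddCommGroup B] [Module k B] [AddCommGroup C] [Module k C]
    (p : A ⊗[k] (B ⊗[k] C)) (α : Module.Dual k A) : B ⊗[k] C :=
  TensorProduct.lid k (B ⊗[k] C) (LinearMap.rTensor (B ⊗[k] C) α p)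

/-- The slice space `p(A*) ⊆ B ⊗ C` of `p ∈ A ⊗ B ⊗ C`. -/
noncomputable def sliceSpace (k : Type*) [Field k] {A B C : Type*} [AddCommGroup A] [Module k A]
    [AddCommGroup B] [Module k B] [AddCommGroup C] [Module k C]
    (p : A ⊗[k] (B ⊗[k] C)) : Submodule k (B ⊗[k] C) :=
  Submodule.span k {w | ∃ α : Module.Dual k A, w = pSlice p α}

/-- The subspace `A₀ ⊗ B₀ ⊗ C₀ ⊆ A ⊗ B ⊗ C` spanned by simple tensors with factors
in the submodules `A₀, B₀, C₀`. -/
noncomputable def subTriple (k : Type*) [Field k] {A B C : Type*} [AddCommGroup A] [Module k A]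
    [AddCommGroup B] [Module k B] [AddCommGroup C] [Module k C]
    (A₀ : Submodule k A) (B₀ : Submodule k B) (C₀ : Submodule k C) :
    Submodule k (A ⊗[k] (B ⊗[k] C)) :=
  Submodule.span k {x | ∃ a ∈ A₀, ∃ b ∈ B₀, ∃ c ∈ C₀, x = a ⊗ₜ[k] (b ⊗ₜ[k] c)}

section Aux

variable {k : Type*} [Field k] {A B C : Type*} [AddCommGroup A] [Module k A]
    [AddCommGroup B] [Module k B] [AddCommGroup C] [Module k C]

/-- The slice map `A* → B ⊗ C`, as a linear map. -/
noncomputable def sliceL (p : A ⊗[k] (B ⊗[k] C)) : Module.Dual k A →ₗ[k] B ⊗[k] C where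
  toFun α := pSlice p α
  map_add' α β := by
    simp [pSlice, LinearMap.rTensor_add, map_add]
  map_smul' c α := by
    simp [pSlice, LinearMap.rTensor_smul]

lemma sliceL_apply (p : A ⊗[k] (B ⊗[k] C)) (α : Module.Dual k A) :
    sliceL p α = pSlice p α := rfl

/-- If a slice of `p` vanishes at a nonzero functional `α`, then `p` is contained in
`ker α ⊗ B ⊗ C`. -/
lemma mem_subTriple_of_slice_eq_zero (p : A ⊗[k] (B ⊗[k] C)) (α : Module.Dual k A)
    (hα : α ≠ 0) (h : pSlice p α = 0) :
    p ∈ subTriple k (LinearMap.ker α) ⊤ ⊤ := by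
  have hα' : Function.Surjective α := by
    rcases LinearMap.surjective_or_eq_zero α with h' | h'
    · exact h'
    · exact absurd h' hα
  have hex : Function.Exact (LinearMap.rTensor (B ⊗[k] C) (LinearMap.ker α).subtype)
      (LinearMap.rTensor (B ⊗[k] C) α) :=
    rTensor_exact (B ⊗[k] C) (LinearMap.exact_subtype_ker_map α) hα'
  have h0 : LinearMap.rTensor (B ⊗[k] C) α p = 0 := by
    have := congrArg (TensorProduct.lid k (B ⊗[k] C)).symm h
    simpa [pSlice] using this
  obtain ⟨q, hq⟩ := (hex p).mp h0
  subst hq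
  clear h h0
  induction q using TensorProduct.induction_on with
  | zero => simp [subTriple]
  | tmul a m =>
    rw [LinearMap.rTensor_tmul]
    induction m using TensorProduct.induction_on with
    | zero => simp [subTriple]
    | tmul b c =>
      exact Submodule.subset_span ⟨(a : A), a.2, b, trivial, c, trivial, rfl⟩
    | add m₁ m₂ h₁ h₂ =>
      rw [TensorProduct.tmul_add]
      exact add_mem h₁ h₂
  | add q₁ q₂ h₁ h₂ =>
    rw [map_add]
    exact add_mem h₁ h₂

end Aux

/-- Over an algebraically closed field, a nonzero concise tensor `p ∈ A ⊗ B ⊗ k²` with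
`dim A ≥ dim B` has a rank-one matrix in its slice space `p(A*) ⊆ B ⊗ k²`. -/
theorem exists_rank_one_slice {k : Type*} [Field k] [IsAlgClosed k] {A B : Type*}
    [AddCommGroup A] [Module k A] [FiniteDimensional k A]
    [AddCommGroup B] [Module k B] [FiniteDimensional k B]
    (p : A ⊗[k] (B ⊗[k] (Fin 2 → k))) (hp : p ≠ 0)
    (hconc : ∀ (A₀ : Submodule k A) (B₀ : Submodule k B) (C₀ : Submodule k (Fin 2 → k)),
      p ∈ subTriple k A₀ B₀ C₀ → A₀ = ⊤ ∧ B₀ = ⊤ ∧ C₀ = ⊤)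
    (hdim : Module.finrank k B ≤ Module.finrank k A) :
    ∃ w ∈ sliceSpace k p, (∃ (b : B) (c : Fin 2 → k), w = b ⊗ₜ[k] c) ∧ w ≠ 0 := by
  classical
  -- vanishing slices force the functional to vanish (A-conciseness)
  have hzero : ∀ α : Module.Dual k A, pSlice p α = 0 → α = 0 := by
    intro α h
    by_contra hα
    have hm := mem_subTriple_of_slice_eq_zero p α hα h
    have hker := (hconc _ ⊤ ⊤ hm).1
    exact hα (LinearMap.ker_eq_top.mp hker)
  -- B is nontrivial
  have hBnt : Nontrivial B := by
    by_contra hB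
    have : Subsingleton B := not_nontrivial_iff_subsingleton.mp hB
    exact hp (Subsingleton.elim p 0)
  let ψ := TensorProduct.piScalarRight k k B (Fin 2)
  let q : Module.Dual k A →ₗ[k] (Fin 2 → B) := ψ.toLinearMap ∘ₗ sliceL p
  let X : Module.Dual k A →ₗ[k] B := (LinearMap.proj 0) ∘ₗ q
  let Y : Module.Dual k A →ₗ[k] B := (LinearMap.proj 1) ∘ₗ q
  -- find a nonzero functional on which the two components of the slice are dependent
  obtain ⟨α, hα, s, t, hst, heq⟩ :
      ∃ α, α ≠ 0 ∧ ∃ s t : k, (s ≠ 0 ∨ t ≠ 0) ∧ s • X α + t • Y α = 0 := by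
    by_cases hY : Function.Injective Y
    · -- then Y is bijective, and X ∘ Y⁻¹ has an eigenvalue
      have hle : Module.finrank k (Module.Dual k A) ≤ Module.finrank k B :=
        LinearMap.finrank_le_finrank_of_injective hY
      have hfr : Module.finrank k (Module.Dual k A) = Module.finrank k B := by
        have := Subspace.dual_finrank_eq (K := k) (V := A)
        omega
      have hs : Function.Surjective Y :=
        (LinearMap.injective_iff_surjective_of_finrank_eq_finrank hfr).mp hY
      let Ye := LinearEquiv.ofBijective Y ⟨hY, hs⟩
      obtain ⟨μ, hev⟩ := Module.End.exists_eigenvalue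
        (X ∘ₗ (Ye.symm : B →ₗ[k] Module.Dual k A))
      obtain ⟨b, hb⟩ := hev.exists_hasEigenvector
      refine ⟨Ye.symm b, ?_, 1, -μ, Or.inl one_ne_zero, ?_⟩
      · intro h0
        apply hb.2
        have := congrArg Ye h0
        simpa using this
      · have h1 : X (Ye.symm b) = μ • b := hb.apply_eq_smul
        have h2 : Y (Ye.symm b) = b := Ye.apply_symm_apply b
        rw [h1, h2, one_smul, neg_smul]
        simp
    · -- Y has a nontrivial kernel
      rw [← LinearMap.ker_eq_bot] at hY
      obtain ⟨α, hαm, hα⟩ := Submodule.exists_mem_ne_zero_of_ne_bot hY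
      exact ⟨α, hα, 0, 1, Or.inr one_ne_zero, by simp [show Y α = 0 from hαm]⟩
  -- now build the rank-one matrix
  have hq : ∃ (b : B) (c : Fin 2 → k), q α = fun j => c j • b := by
    rcases eq_or_ne t 0 with ht | ht
    · -- then s ≠ 0 and X α = 0
      have hs : s ≠ 0 := by tauto
      have hX : X α = 0 := by
        have : s • X α = 0 := by simpa [ht] using heq
        exact (smul_eq_zero.mp this).resolve_left hs
      refine ⟨Y α, ![0, 1], ?_⟩
      funext j
      fin_cases j
      · simp only [Fin.zero_eta, Fin.isValue, Matrix.cons_val_zero, zero_smul]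
        exact hX
      · simp only [Fin.mk_one, Fin.isValue, Matrix.cons_val_one, Matrix.head_cons, Matrix.cons_val_zero, one_smul]
        rfl
    · -- then Y α = (-(s/t)) • X α
      have hYα : Y α = (-(s / t)) • X α := by
        have h1 : t • Y α = -(s • X α) := eq_neg_of_add_eq_zero_right heq
        have h2 : Y α = t⁻¹ • (t • Y α) := by
          rw [smul_smul, inv_mul_cancel₀ ht, one_smul]
        rw [h2, h1, smul_neg, smul_smul, div_eq_mul_inv, neg_smul, mul_comm]
      refine ⟨X α, ![1, -(s / t)], ?_⟩
      funext j
      fin_cases j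
      · simp only [Fin.zero_eta, Fin.isValue, Matrix.cons_val_zero, one_smul]
        rfl
      · simp only [Fin.mk_one, Fin.isValue, Matrix.cons_val_one, Matrix.head_cons]
        exact hYα
  obtain ⟨b, c, hbc⟩ := hq
  refine ⟨pSlice p α, Submodule.subset_span ⟨α, rfl⟩, ⟨b, c, ?_⟩, ?_⟩
  · -- pSlice p α = b ⊗ c
    have h1 : ψ (b ⊗ₜ[k] c) = fun j => c j • b := by
      simp [ψ]
    have h2 : ψ (sliceL p α) = q α := rfl
    have : ψ (sliceL p α) = ψ (b ⊗ₜ[k] c) := by rw [h1, h2, hbc]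
    have := ψ.injective this
    rw [← sliceL_apply, this]
  · intro h0
    exact hα (hzero α h0)
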